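/- If T : X → X is a bounded linear operator on a Banach space X with finite ascent and descent with common value p, then R(T^p) is a closed subspace of X. -/

import Mathlib

/-- If a bounded operator `T` on a Banach space has finite ascent and descent
with common value `p`, then the range of `T ^ p` is closed. -/
theorem range_pow_closed_of_finite_ascent_descent {X : Type*} [NormedAddCommGroup X]
    [NormedSpace ℝ X] [CompleteSpace X] (T : X →L[ℝ] X) (p : ℕ)
    (hascEq : LinearMap.ker ((T ^ p : X →L[ℝ] X) : X →ₗ[ℝ] X) = LinearMap.ker ((T ^ (p + 1) : X →L[ℝ] X) : X →ₗ[ℝ] X))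
    (hascMin : ∀ j : ℕ, j < p → LinearMap.ker ((T ^ j : X →L[ℝ] X) : X →ₗ[ℝ] X) ≠ LinearMap.ker ((T ^ (j + 1) : X →L[ℝ] X) : X →ₗ[ℝ] X))
    (hdesEq : LinearMap.range ((T ^ p : X →L[ℝ] X) : X →ₗ[ℝ] X) = LinearMap.range ((T ^ (p + 1) : X →L[ℝ] X) : X →ₗ[ℝ] X))
    (hdesMin : ∀ j : ℕ, j < p → LinearMap.range ((T ^ j : X →L[ℝ] X) : X →ₗ[ℝ] X) ≠ LinearMap.range ((T ^ (j + 1) : X →L[ℝ] X) : X →ₗ[ℝ] X)) :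
    IsClosed ((LinearMap.range ((T ^ p : X →L[ℝ] X) : X →ₗ[ℝ] X) : Submodule ℝ X) : Set X) := by
  classical
  have mulapp : ∀ (n : ℕ) (x : X), (T ^ (n + 1)) x = T ((T ^ n) x) := by
    intro n x
    rw [pow_succ']
    rfl
  -- kernel stabilization
  have kerStab : ∀ k, LinearMap.ker ((T ^ (p + k) : X →L[ℝ] X) : X →ₗ[ℝ] X) = LinearMap.ker ((T ^ p : X →L[ℝ] X) : X →ₗ[ℝ] X) := by
    intro k
    induction k with
    | zero => rfl
    | succ k ih =>
      ext x
      simp only [LinearMap.mem_ker]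
      constructor
      · intro hx
        have h1 : (T ^ (p + k)) (T x) = 0 := by
          have e : (T ^ (p + k + 1)) x = (T ^ (p + k)) (T x) := by
            rw [pow_succ]; rfl
          rw [← e]; exact hx
        have h2 : (T ^ p) (T x) = 0 :=
          LinearMap.mem_ker.mp (ih ▸ LinearMap.mem_ker.mpr h1)
        have h3 : (T ^ (p + 1)) x = 0 := by
          rw [pow_succ]; exact h2
        have h4 : x ∈ LinearMap.ker ((T ^ p : X →L[ℝ] X) : X →ₗ[ℝ] X) :=
          hascEq ▸ LinearMap.mem_ker.mpr h3
        exact LinearMap.mem_ker.mp h4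
      · intro hx
        have e : (T ^ (p + (k + 1))) x = (T ^ (k + 1)) ((T ^ p) x) := by
          rw [add_comm p (k + 1), pow_add]; rfl
        simp only [ContinuousLinearMap.coe_coe] at hx ⊢
        rw [e, hx, map_zero]
  -- range stabilization
  have rangeStab : ∀ k, LinearMap.range ((T ^ (p + k) : X →L[ℝ] X) : X →ₗ[ℝ] X) = LinearMap.range ((T ^ p : X →L[ℝ] X) : X →ₗ[ℝ] X) := by
    intro k
    induction k with
    | zero => rfl
    | succ k ih =>
      ext x
      simp only [LinearMap.mem_range]
      constructor
      · rintro ⟨y, rfl⟩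
        obtain ⟨z, hz⟩ := LinearMap.mem_range.mp
          (ih ▸ (LinearMap.mem_range.mpr ⟨y, rfl⟩ : (T ^ (p + k)) y ∈ LinearMap.range ((T ^ (p + k) : X →L[ℝ] X) : X →ₗ[ℝ] X)))
        have h2 : (T ^ (p + k + 1)) y = (T ^ (p + 1)) z := by
          simp only [ContinuousLinearMap.coe_coe] at hz
          rw [mulapp (p + k) y, mulapp p z, hz]
        obtain ⟨w, hw⟩ := LinearMap.mem_range.mp
          (hdesEq ▸ (LinearMap.mem_range.mpr ⟨z, rfl⟩ : (T ^ (p + 1)) z ∈ LinearMap.range ((T ^ (p + 1) : X →L[ℝ] X) : X →ₗ[ℝ] X)))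
        refine ⟨w, ?_⟩
        show (T ^ p) w = (T ^ (p + k + 1)) y
        simp only [ContinuousLinearMap.coe_coe] at hw
        rw [hw, ← h2]
      · rintro ⟨y, rfl⟩
        obtain ⟨z, hz⟩ := LinearMap.mem_range.mp
          (hdesEq ▸ (LinearMap.mem_range.mpr ⟨y, rfl⟩ : (T ^ p) y ∈ LinearMap.range ((T ^ p : X →L[ℝ] X) : X →ₗ[ℝ] X)))
        obtain ⟨w, hw⟩ := LinearMap.mem_range.mp
          (ih.symm ▸ (LinearMap.mem_range.mpr ⟨z, rfl⟩ : (T ^ p) z ∈ LinearMap.range ((T ^ p : X →L[ℝ] X) : X →ₗ[ℝ] X)))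
        refine ⟨w, ?_⟩
        show (T ^ (p + k + 1)) w = (T ^ p) y
        simp only [ContinuousLinearMap.coe_coe] at hw hz
        rw [mulapp (p + k) w, hw]
        calc T ((T ^ p) z) = (T ^ (p + 1)) z := (mulapp p z).symm
          _ = (T ^ p) y := hz
  set N := LinearMap.ker ((T ^ p : X →L[ℝ] X) : X →ₗ[ℝ] X) with hN
  set R := LinearMap.range ((T ^ p : X →L[ℝ] X) : X →ₗ[ℝ] X) with hR
  have hNclosed : IsClosed (N : Set X) := ContinuousLinearMap.isClosed_ker (T ^ p)
  haveI : CompleteSpace N := hNclosed.completeSpace_coe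
  -- the key continuous linear map
  set A : X × N →L[ℝ] X := (T ^ p).coprod N.subtypeL with hA
  have hAapp : ∀ q : X × N, A q = (T ^ p) q.1 + (q.2 : X) := fun q => rfl
  -- surjectivity : X = R + N
  have hsurj : Function.Surjective A := by
    intro y
    have h1 : (T ^ p) y ∈ LinearMap.range ((T ^ (p + p) : X →L[ℝ] X) : X →ₗ[ℝ] X) :=
      (rangeStab p) ▸ (LinearMap.mem_range.mpr ⟨y, rfl⟩)
    obtain ⟨z, hz⟩ := LinearMap.mem_range.mp h1
    have hpp : ∀ x : X, (T ^ (p + p)) x = (T ^ p) ((T ^ p) x) := by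
      intro x; rw [pow_add]; rfl
    have hn : y - (T ^ p) z ∈ N := by
      simp only [ContinuousLinearMap.coe_coe] at hz
      rw [hN, LinearMap.mem_ker, ContinuousLinearMap.coe_coe, map_sub, ← hpp, hz, sub_self]
    refine ⟨(z, ⟨y - (T ^ p) z, hn⟩), ?_⟩
    rw [hAapp]
    simp
  -- trivial intersection: N ⊓ R = ⊥
  have hNR : ∀ x : X, x ∈ R → x ∈ N → x = 0 := by
    intro x hxR hxN
    obtain ⟨y, hy⟩ := LinearMap.mem_range.mp hxR
    have h1 : (T ^ (p + p)) y = 0 := by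
      rw [pow_add]
      show (T ^ p) ((T ^ p) y) = 0
      simp only [ContinuousLinearMap.coe_coe] at hy
      rw [hy]
      exact LinearMap.mem_ker.mp hxN
    have h2 : y ∈ N :=
      (kerStab p) ▸ LinearMap.mem_ker.mpr h1
    rw [← hy]
    exact LinearMap.mem_ker.mp h2
  -- by the open mapping theorem, A is open
  have hopen : IsOpenMap A := A.isOpenMap hsurj
  -- the preimage of R under A
  have hpre : A ⁻¹' (R : Set X) = {q : X × N | (q.2 : X) = 0} := by
    ext q
    simp only [Set.mem_preimage, Set.mem_setOf_eq, SetLike.mem_coe, hAapp]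
    constructor
    · intro hq
      have h1 : (q.2 : X) ∈ R := by
        have h2 : ((T ^ p) q.1 + (q.2 : X)) - (T ^ p) q.1 ∈ R :=
          Submodule.sub_mem R hq (LinearMap.mem_range.mpr ⟨q.1, rfl⟩)
        simpa using h2
      exact hNR _ h1 q.2.2
    · intro hq
      rw [hq, add_zero]
      exact LinearMap.mem_range.mpr ⟨q.1, rfl⟩
  have hpreclosed : IsClosed (A ⁻¹' (R : Set X)) := by
    rw [hpre]
    exact isClosed_eq (continuous_subtype_val.comp continuous_snd) continuous_const
  rw [← isOpen_compl_iff]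
  have himg : (R : Set X)ᶜ = A '' (A ⁻¹' (R : Set X)ᶜ) :=
    (Set.image_preimage_eq _ hsurj).symm
  rw [himg, Set.preimage_compl]
  exact hopen _ hpreclosed.isOpen_compl
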